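/- Funk parabola of type 3: let y₀ ∈ (−1,1), F = (f₀,g₀) ∈ B², and let P = (x,y) ∈ B² with y ≠ y₀ and P ≠ F. Put ȳ = 1 − sgn(y₀−y)·y, σ₃ = 1 − sgn(y₀−y)·y₀, A = 2σ₃·g₀·sgn(y₀−y), B = −2σ₃·f₀, C = 2σ₃·(1 − sgn(y₀−y)·g₀), D = σ₃²·(f₀² + g₀² − 1). Then d_F(F,P) = ln ρ(y,y₀) holds if and only if ȳ⁴ + x²·ȳ² − 2ȳ³ + A·ȳ² + B·x·ȳ + C·ȳ + D = 0. -/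

import Mathlib

/-- The Funk distance on the open unit ball of Euclidean n-space:
`d_F(P,Q) = ln((√k − ⟨P, Q−P⟩)/(√k − ⟨Q, Q−P⟩))` with
`k = ⟨P, Q−P⟩² + (1 − ‖P‖²)‖Q−P‖²`. -/
noncomputable def funkDist {n : ℕ} (P Q : EuclideanSpace ℝ (Fin n)) : ℝ :=
  Real.log
    ((Real.sqrt ((inner ℝ P (Q - P) : ℝ) ^ 2 + (1 - ‖P‖ ^ 2) * ‖Q - P‖ ^ 2) - (inner ℝ P (Q - P) : ℝ)) /
     (Real.sqrt ((inner ℝ P (Q - P) : ℝ) ^ 2 + (1 - ‖P‖ ^ 2) * ‖Q - P‖ ^ 2) - (inner ℝ Q (Q - P) : ℝ)))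

/-- `ρ(ε,η) = (1 + sgn(ε−η)·ε)/(1 + sgn(ε−η)·η)`. -/
noncomputable def rho (ε η : ℝ) : ℝ :=
  (1 + Real.sign (ε - η) * ε) / (1 + Real.sign (ε - η) * η)

/-- The point `(a,b)` of the Euclidean plane. -/
def pt (a b : ℝ) : EuclideanSpace ℝ (Fin 2) := WithLp.toLp 2 ![a, b]

lemma funk_core (a b k Yb σ₃ m : ℝ) (hka : a^2 < k) (hkb : b^2 < k) (hab : a < b)
    (hσ : 0 < σ₃) (hmYσ : Yb - σ₃ = m) (hm : 0 < m) :
    Real.log ((Real.sqrt k - a)/(Real.sqrt k - b)) = Real.log (Yb/σ₃) ↔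
    (Yb*b - σ₃*a)^2 = m^2 * k := by
  set r := Real.sqrt k with hr
  have hk0 : 0 ≤ k := le_of_lt (lt_of_le_of_lt (sq_nonneg a) hka)
  have hr0 : 0 ≤ r := Real.sqrt_nonneg k
  have hr2 : r^2 = k := Real.sq_sqrt hk0
  have hra : a < r := by nlinarith
  have hrb : b < r := by nlinarith
  have hra' : 0 < a + r := by nlinarith
  have hrb' : 0 < b + r := by linarith
  have hYb : 0 < Yb := by linarith
  have h1 : 0 < (r - a)/(r - b) := div_pos (by linarith) (by linarith)
  have h2 : 0 < Yb/σ₃ := div_pos hYb hσ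
  constructor
  · intro h
    have h3 : (r - a)/(r - b) = Yb/σ₃ :=
      Real.log_injOn_pos (Set.mem_Ioi.mpr h1) (Set.mem_Ioi.mpr h2) h
    have h4 : (r - a) * σ₃ = Yb * (r - b) := (div_eq_div_iff (by linarith) (ne_of_gt hσ)).mp h3
    have h5 : Yb*b - σ₃*a = m * r := by linear_combination h4 + r * hmYσ
    rw [h5]; rw [← hr2]; ring
  · intro h
    have h6 : (Yb*b - σ₃*a - m*r) * (Yb*b - σ₃*a + m*r) = 0 := by
      have : m^2 * k = (m*r)^2 := by rw [← hr2]; ring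
      rw [this] at h
      linear_combination h
    have h7 : 0 < Yb*b - σ₃*a + m*r := by nlinarith
    have h5 : Yb*b - σ₃*a = m * r := by
      rcases mul_eq_zero.mp h6 with h | h
      · linarith
      · linarith
    have h4 : (r - a) * σ₃ = Yb * (r - b) := by linear_combination h5 - r * hmYσ
    have h3 : (r - a)/(r - b) = Yb/σ₃ := (div_eq_div_iff (by linarith) (ne_of_gt hσ)).mpr h4
    rw [h3]

lemma pt_inner (a b c d : ℝ) : (inner ℝ (pt a b) (pt c d) : ℝ) = a*c + b*d := by
  simp [pt, PiLp.inner_apply, Fin.sum_univ_two]; ring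

lemma pt_sub (a b c d : ℝ) : pt a b - pt c d = pt (a-c) (b-d) := by
  ext i; fin_cases i <;> simp [pt]

lemma pt_norm_sq (a b : ℝ) : ‖pt a b‖^2 = a^2 + b^2 := by
  rw [← real_inner_self_eq_norm_sq]
  rw [pt_inner]; ring

set_option maxHeartbeats 1000000 in
/-- Type-3 Funk parabola: `d_F(F,P) = d_F(P,s) = ln ρ(y,y₀)` iff the quartic
`ȳ⁴ + x²ȳ² − 2ȳ³ + Aȳ² + Bxȳ + Cȳ + D = 0` holds, where `ȳ = 1 − sgn(y₀−y)·y`. -/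
theorem funk_parabola_stmt15 (y₀ f₀ g₀ x y s σ₃ A B C D Ybar : ℝ)
    (hy₀ : -1 < y₀ ∧ y₀ < 1) (hF : ‖pt f₀ g₀‖ < 1) (hP : ‖pt x y‖ < 1)
    (hyy : y ≠ y₀) (hne : pt x y ≠ pt f₀ g₀)
    (hs : s = Real.sign (y₀ - y)) (hY : Ybar = 1 - s * y) (hσ : σ₃ = 1 - s * y₀)
    (hA : A = 2 * σ₃ * g₀ * s) (hB : B = -2 * σ₃ * f₀)
    (hC : C = 2 * σ₃ * (1 - s * g₀)) (hD : D = σ₃ ^ 2 * (f₀ ^ 2 + g₀ ^ 2 - 1)) :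
    funkDist (pt f₀ g₀) (pt x y) = Real.log (rho y y₀) ↔
      Ybar ^ 4 + x ^ 2 * Ybar ^ 2 - 2 * Ybar ^ 3 + A * Ybar ^ 2 + B * x * Ybar
        + C * Ybar + D = 0 := by
  have hP2 : x^2 + y^2 < 1 := by nlinarith [pt_norm_sq x y, norm_nonneg (pt x y)]
  have hF2 : f₀^2 + g₀^2 < 1 := by nlinarith [pt_norm_sq f₀ g₀, norm_nonneg (pt f₀ g₀)]
  have hy₀2 : y₀^2 < 1 := by nlinarith [hy₀.1, hy₀.2]
  -- sign facts
  obtain ⟨hsor, hm0, hsgn⟩ : (s = 1 ∨ s = -1) ∧ 0 < s * (y₀ - y) ∧ Real.sign (y - y₀) = -s := by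
    rcases lt_or_gt_of_ne hyy with h | h
    · have h1 : s = 1 := by rw [hs]; exact Real.sign_of_pos (by linarith)
      have h2 : Real.sign (y - y₀) = -1 := Real.sign_of_neg (by linarith)
      exact ⟨Or.inl h1, by rw [h1]; linarith, by rw [h1, h2]⟩
    · have h1 : s = -1 := by rw [hs]; exact Real.sign_of_neg (by linarith)
      have h2 : Real.sign (y - y₀) = 1 := Real.sign_of_pos (by linarith)
      exact ⟨Or.inr h1, by rw [h1]; linarith, by rw [h1, h2]; ring⟩
  have hs2 : s^2 = 1 := by rcases hsor with h | h <;> rw [h] <;> norm_num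
  -- positivity of distance ingredients
  have hvne : ¬(x = f₀ ∧ y = g₀) := by
    rintro ⟨h1, h2⟩; exact hne (by rw [h1, h2])
  have hv : 0 < (x - f₀)^2 + (y - g₀)^2 := by
    rcases not_and_or.mp hvne with h | h
    · have := pow_pos (abs_pos.mpr (sub_ne_zero.mpr h)) 2
      rw [sq_abs] at this; nlinarith [sq_nonneg (y - g₀)]
    · have := pow_pos (abs_pos.mpr (sub_ne_zero.mpr h)) 2
      rw [sq_abs] at this; nlinarith [sq_nonneg (x - f₀)]
  -- rho value
  have hrho : rho y y₀ = Ybar / σ₃ := by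
    rw [rho, hsgn, hY, hσ]; ring_nf
  -- unfold funkDist
  have hfd : funkDist (pt f₀ g₀) (pt x y) =
      Real.log ((Real.sqrt ((f₀*(x-f₀)+g₀*(y-g₀))^2
          + (1 - (f₀^2+g₀^2))*((x-f₀)^2+(y-g₀)^2)) - (f₀*(x-f₀)+g₀*(y-g₀))) /
        (Real.sqrt ((f₀*(x-f₀)+g₀*(y-g₀))^2
          + (1 - (f₀^2+g₀^2))*((x-f₀)^2+(y-g₀)^2)) - (x*(x-f₀)+y*(y-g₀)))) := by
    rw [funkDist, pt_sub, pt_inner, pt_inner, pt_norm_sq, pt_norm_sq]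
  set a := f₀*(x-f₀)+g₀*(y-g₀) with ha
  set b := x*(x-f₀)+y*(y-g₀) with hb
  set v := (x-f₀)^2+(y-g₀)^2 with hvdef
  set k := a^2 + (1 - (f₀^2+g₀^2))*v with hk
  set m := s*(y₀ - y) with hmdef
  have hYσ : 0 < σ₃ := by
    rw [hσ]; nlinarith [hs2, sq_nonneg (1 - s*y₀)]
  have hmYσ : Ybar - σ₃ = m := by rw [hY, hσ, hmdef]; ring
  have hka : a^2 < k := by
    have : k - a^2 = (1 - (f₀^2+g₀^2))*v := by rw [hk]; ring
    nlinarith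
  have hkb : b^2 < k := by
    have : k - b^2 = (1 - (x^2+y^2))*v := by rw [hk, ha, hb, hvdef]; ring
    nlinarith
  have hab : a < b := by
    have : b - a = v := by rw [ha, hb, hvdef]; ring
    linarith
  rw [hfd, hrho, funk_core a b k Ybar σ₃ m hka hkb hab hYσ hmYσ hm0]
  -- key polynomial identity
  have hkey : (Ybar*b - σ₃*a)^2 - m^2*k =
      v * (Ybar ^ 4 + x ^ 2 * Ybar ^ 2 - 2 * Ybar ^ 3 + A * Ybar ^ 2 + B * x * Ybar
        + C * Ybar + D) := by
    subst hA hB hC hD hY hσ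
    rcases hsor with h | h <;> subst h <;>
      (rw [hmdef, hk, ha, hb, hvdef]; ring)
  constructor
  · intro h
    have h2 : v * (Ybar ^ 4 + x ^ 2 * Ybar ^ 2 - 2 * Ybar ^ 3 + A * Ybar ^ 2 + B * x * Ybar
        + C * Ybar + D) = 0 := by linarith
    rcases mul_eq_zero.mp h2 with h3 | h3
    · linarith
    · exact h3
  · intro h
    rw [h, mul_zero] at hkey
    linarith
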